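/- Let ℓ ≥ 1, let G_1, …, G_ℓ be finite simple undirected graphs, each with two distinct designated vertices s_i, t_i ∈ V(G_i), and let G* be the graph obtained from the disjoint union of G_1, …, G_ℓ by identifying t_i with s_{i+1} for each i = 1, …, ℓ−1. Let p ≥ 1 and k ≥ 0 be integers and suppose that for every i the graph G_i admits a (p, s_i, t_i)-routing with at most k+1 shared edges. Then G* admits a (p, s_1, t_ℓ)-routing with at most ℓ·(k+1)−1 shared edges if and only if there exists an index i such that G_i admits a (p, s_i, t_i)-routing with at most k shared edges. -/

import Mathlib

/-- The set of edges shared by at least two paths of the routing `P`. -/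
def mseSharedEdges {V : Type*} {G : SimpleGraph V} {s t : V} {p : ℕ}
    (P : Fin p → G.Walk s t) : Set (Sym2 V) :=
  {e | ∃ i j : Fin p, i ≠ j ∧ e ∈ (P i).edges ∧ e ∈ (P j).edges}

/-- Vertex type of the chain-gluing of the graphs `G i` (on vertex types `V i`, with
designated vertices `s i`, `t i`): the disjoint union of the `V i`, where for `i ≠ 0`
the vertex `s i` is removed (it is identified with `t (i-1)`, which represents the
glued vertex). -/
def MseGlueV {ℓ : ℕ} (V : Fin ℓ → Type) (s : ∀ i, V i) : Type :=
  {x : Σ i : Fin ℓ, V i // x.2 = s x.1 → x.1.1 = 0}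

open Classical in
/-- The canonical map from `V i` into the glued vertex type: `s i` (for `i ≠ 0`) is sent
to the glued vertex represented by `t (i-1)`; all other vertices are sent to themselves. -/
noncomputable def mseGlueEmb {ℓ : ℕ} {V : Fin ℓ → Type} (s t : ∀ i, V i)
    (hst : ∀ i, s i ≠ t i) (i : Fin ℓ) (v : V i) : MseGlueV V s :=
  if h : v = s i ∧ i.1 ≠ 0 then
    ⟨⟨⟨i.1 - 1, Nat.lt_of_le_of_lt (Nat.sub_le _ _) i.isLt⟩,
       t ⟨i.1 - 1, Nat.lt_of_le_of_lt (Nat.sub_le _ _) i.isLt⟩⟩,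
     fun hts => absurd hts.symm (hst _)⟩
  else
    ⟨⟨i, v⟩, fun hv => Classical.byContradiction fun h0 => h ⟨hv, h0⟩⟩

/-- The chain-gluing of the graphs `G i`: the edges are exactly the images of the edges
of the `G i` under the canonical maps. -/
noncomputable def mseGlueGraph {ℓ : ℕ} {V : Fin ℓ → Type} (Gs : ∀ i, SimpleGraph (V i))
    (s t : ∀ i, V i) (hst : ∀ i, s i ≠ t i) : SimpleGraph (MseGlueV V s) :=
  SimpleGraph.fromRel (fun x y =>
    ∃ (i : Fin ℓ) (a b : V i), (Gs i).Adj a b ∧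
      x = mseGlueEmb s t hst i a ∧ y = mseGlueEmb s t hst i b)

/-- The source `v_0 = s 0` of the glued graph. -/
noncomputable def mseGlueSrc {ℓ : ℕ} (hl : 1 ≤ ℓ) {V : Fin ℓ → Type} (s t : ∀ i, V i)
    (hst : ∀ i, s i ≠ t i) : MseGlueV V s :=
  mseGlueEmb s t hst ⟨0, hl⟩ (s ⟨0, hl⟩)

/-- The sink `v_ℓ = t (ℓ-1)` of the glued graph. -/
noncomputable def mseGlueSnk {ℓ : ℕ} (hl : 1 ≤ ℓ) {V : Fin ℓ → Type} (s t : ∀ i, V i)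
    (hst : ∀ i, s i ≠ t i) : MseGlueV V s :=
  mseGlueEmb s t hst ⟨ℓ - 1, Nat.sub_lt hl Nat.one_pos⟩ (t ⟨ℓ - 1, Nat.sub_lt hl Nat.one_pos⟩)

section Aux

variable {ℓ : ℕ} {V : Fin ℓ → Type} (s t : ∀ i, V i) (hst : ∀ i, s i ≠ t i)

lemma mseEmb_eq {i j : Fin ℓ} {a : V i} {c : V j}
    (h : mseGlueEmb s t hst i a = mseGlueEmb s t hst j c) :
    (∃ hij : i = j, HEq a c) ∨ (i.1 + 1 = j.1 ∧ a = t i ∧ c = s j) ∨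
      (j.1 + 1 = i.1 ∧ c = t j ∧ a = s i) := by
  unfold mseGlueEmb MseGlueV at h
  split_ifs at h with h1 h2 h2 <;>
    rw [Subtype.mk_eq_mk, Sigma.mk.inj_iff] at h <;> obtain ⟨hfin, hv⟩ := h
  · left
    obtain ⟨ha, hi0⟩ := h1; obtain ⟨hc, hj0⟩ := h2
    have hij : i = j := Fin.ext (by have := Fin.val_eq_of_eq hfin; simp at this; omega)
    exact ⟨hij, by subst hij; rw [ha, hc]⟩
  · right; right
    obtain ⟨ha, hi0⟩ := h1
    subst hfin
    refine ⟨by simp; omega, (heq_iff_eq.mp hv).symm, ha⟩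
  · right; left
    obtain ⟨hc, hj0⟩ := h2
    have hval := Fin.val_eq_of_eq hfin
    have h2' : HEq (t ⟨j.1 - 1, Nat.lt_of_le_of_lt (Nat.sub_le _ _) j.isLt⟩) (t i) := by
      rw [hfin]
    refine ⟨by simp at hval; omega, eq_of_heq (hv.trans h2'), hc⟩
  · left
    exact ⟨hfin, hv⟩

lemma mseEmb_inj (i : Fin ℓ) : Function.Injective (mseGlueEmb s t hst i) := by
  intro a c h
  rcases mseEmb_eq s t hst h with ⟨_, hh⟩ | ⟨h1, _⟩ | ⟨h1, _⟩
  · exact heq_iff_eq.mp hh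
  · omega
  · omega

lemma mseSeg_eq {i j : Fin ℓ} {a b : V i} {c d : V j} (hab : a ≠ b)
    (h1 : mseGlueEmb s t hst i a = mseGlueEmb s t hst j c)
    (h2 : mseGlueEmb s t hst i b = mseGlueEmb s t hst j d) : i = j := by
  rcases mseEmb_eq s t hst h1 with ⟨hij, _⟩ | ⟨p1, q1, r1⟩ | ⟨p1, q1, r1⟩ <;>
    [exact hij; skip; skip] <;>
    rcases mseEmb_eq s t hst h2 with ⟨hij, _⟩ | ⟨p2, q2, r2⟩ | ⟨p2, q2, r2⟩ <;>
    first
      | exact hij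
      | omega
      | exact absurd (q1.trans q2.symm) hab
      | exact absurd (r1.trans r2.symm) hab

lemma mseSym2_eq {i j : Fin ℓ} {f : Sym2 (V i)} {g : Sym2 (V j)}
    (hf : ¬ f.IsDiag) (hmap : Sym2.map (mseGlueEmb s t hst i) f = Sym2.map (mseGlueEmb s t hst j) g) :
    ∃ hij : i = j, HEq f g := by
  induction f using Sym2.ind with | _ a b =>
  induction g using Sym2.ind with | _ c d =>
  have hab : a ≠ b := by simpa using hf
  simp only [Sym2.map_pair_eq, Sym2.eq_iff] at hmap
  rcases hmap with ⟨hc, hd⟩ | ⟨hc, hd⟩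
  · have hij := mseSeg_eq s t hst hab hc hd
    subst hij
    rw [mseEmb_inj s t hst i hc, mseEmb_inj s t hst i hd]
    exact ⟨rfl, HEq.rfl⟩
  · have hij := mseSeg_eq s t hst hab hc hd
    subst hij
    rw [mseEmb_inj s t hst i hc, mseEmb_inj s t hst i hd]
    exact ⟨rfl, heq_of_eq (Sym2.eq_swap)⟩

end Aux

section Aux2

variable {ℓ : ℕ} {V : Fin ℓ → Type} (Gs : ∀ i, SimpleGraph (V i))
  (s t : ∀ i, V i) (hst : ∀ i, s i ≠ t i)

lemma mseGlue_adj {x y : MseGlueV V s} :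
    (mseGlueGraph Gs s t hst).Adj x y ↔ x ≠ y ∧ ∃ (i : Fin ℓ) (a b : V i),
      (Gs i).Adj a b ∧ x = mseGlueEmb s t hst i a ∧ y = mseGlueEmb s t hst i b := by
  rw [mseGlueGraph, SimpleGraph.fromRel_adj]
  constructor
  · rintro ⟨hne, ⟨i, a, b, hab, hx, hy⟩ | ⟨i, a, b, hab, hy, hx⟩⟩
    exacts [⟨hne, i, a, b, hab, hx, hy⟩, ⟨hne, i, b, a, hab.symm, hx, hy⟩]
  · rintro ⟨hne, i, a, b, hab, hx, hy⟩
    exact ⟨hne, Or.inl ⟨i, a, b, hab, hx, hy⟩⟩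

noncomputable def mseHom (i : Fin ℓ) : Gs i →g mseGlueGraph Gs s t hst where
  toFun := mseGlueEmb s t hst i
  map_rel' := fun {a b} hab => (mseGlue_adj Gs s t hst).mpr
    ⟨fun h => hab.ne (mseEmb_inj s t hst i h), i, a, b, hab, rfl, rfl⟩

end Aux2

section Chain

open SimpleGraph

variable {ℓ : ℕ} (hl : 1 ≤ ℓ) {V : Fin ℓ → Type} (Gs : ∀ i, SimpleGraph (V i))
  (s t : ∀ i, V i) (hst : ∀ i, s i ≠ t i)

lemma mseGlue_compat (n : ℕ) (h : n + 1 < ℓ) :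
    mseGlueEmb s t hst ⟨n, Nat.lt_of_succ_lt h⟩ (t ⟨n, Nat.lt_of_succ_lt h⟩) =
      mseGlueEmb s t hst ⟨n + 1, h⟩ (s ⟨n + 1, h⟩) := by
  unfold mseGlueEmb
  erw [dif_neg (fun hc => hst _ hc.1.symm), dif_pos ⟨rfl, Nat.succ_ne_zero n⟩]
  rfl

noncomputable def mseChain (P : ∀ i, (Gs i).Walk (s i) (t i)) :
    (n : ℕ) → (h : n < ℓ) →
      (mseGlueGraph Gs s t hst).Walk (mseGlueSrc hl s t hst)
        (mseGlueEmb s t hst ⟨n, h⟩ (t ⟨n, h⟩))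
  | 0, h => ((P ⟨0, h⟩).map (mseHom Gs s t hst ⟨0, h⟩)).copy rfl rfl
  | n + 1, h =>
      (mseChain P n (Nat.lt_of_succ_lt h)).append
        (((P ⟨n + 1, h⟩).map (mseHom Gs s t hst ⟨n + 1, h⟩)).copy
          (mseGlue_compat s t hst n h).symm rfl)

lemma mseChain_edges (P : ∀ i, (Gs i).Walk (s i) (t i)) (n : ℕ) (h : n < ℓ)
    {e : Sym2 (MseGlueV V s)} (he : e ∈ (mseChain hl Gs s t hst P n h).edges) :
    ∃ (m : Fin ℓ) (f : Sym2 (V m)), f ∈ (P m).edges ∧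
      e = Sym2.map (mseGlueEmb s t hst m) f := by
  induction n with
  | zero =>
    erw [mseChain, Walk.edges_copy, Walk.edges_map, List.mem_map] at he
    obtain ⟨f, hf, rfl⟩ := he
    exact ⟨⟨0, h⟩, f, hf, rfl⟩
  | succ n ih =>
    rw [mseChain, Walk.edges_append, List.mem_append] at he
    rcases he with he | he
    · exact ih _ he
    · erw [Walk.edges_copy, Walk.edges_map, List.mem_map] at he
      obtain ⟨f, hf, rfl⟩ := he
      exact ⟨⟨n + 1, h⟩, f, hf, rfl⟩

end Chain

section Proj

open SimpleGraph

variable {ℓ : ℕ} (hl : 1 ≤ ℓ) {V : Fin ℓ → Type} (Gs : ∀ i, SimpleGraph (V i))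
  (s t : ∀ i, V i) (hst : ∀ i, s i ≠ t i)

open Classical in
noncomputable def mseProj (i : Fin ℓ) (x : MseGlueV V s) : V i :=
  if h : x.1.1.1 = i.1 then cast (congrArg V (Fin.ext h)) x.1.2
  else if x.1.1.1 < i.1 then s i else t i

lemma mseProj_emb_self (i : Fin ℓ) (v : V i) :
    mseProj s t i (mseGlueEmb s t hst i v) = v := by
  by_cases hc : v = s i ∧ i.1 ≠ 0
  · erw [mseGlueEmb, dif_pos hc]
    unfold mseProj
    split_ifs with h1 h2
    · exfalso; simp at h1; omega
    · exact hc.1.symm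
    · exfalso; simp at h2; omega
  · erw [mseGlueEmb, dif_neg hc]
    unfold mseProj
    split_ifs with h1 h2
    · rfl
    · exact absurd rfl h1
    · exact absurd rfl h1

lemma mseProj_emb_lt {i m : Fin ℓ} (h : m.1 < i.1) (v : V m) :
    mseProj s t i (mseGlueEmb s t hst m v) = s i := by
  by_cases hc : v = s m ∧ m.1 ≠ 0
  · erw [mseGlueEmb, dif_pos hc]
    unfold mseProj
    split_ifs with h1 h2
    · exfalso; simp at h1; omega
    · rfl
    · exfalso; simp at h2; omega
  · erw [mseGlueEmb, dif_neg hc]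
    unfold mseProj
    split_ifs with h1 h2
    · exfalso; simp at h1; omega
    · rfl

lemma mseProj_emb_gt {i m : Fin ℓ} (h : i.1 < m.1) (v : V m) :
    mseProj s t i (mseGlueEmb s t hst m v) = t i := by
  by_cases hc : v = s m ∧ m.1 ≠ 0
  · erw [mseGlueEmb, dif_pos hc]
    unfold mseProj
    split_ifs with h1 h2
    · -- m - 1 = i
      have hfin : (⟨m.1 - 1, Nat.lt_of_le_of_lt (Nat.sub_le _ _) m.isLt⟩ : Fin ℓ) = i := by
        apply Fin.ext; simpa using h1
      subst hfin
      rfl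
    · exfalso; simp at h1 h2; omega
    · rfl
  · erw [mseGlueEmb, dif_neg hc]
    unfold mseProj
    split_ifs with h1 h2
    · exfalso; simp at h1; omega
    · exfalso; simp at h2; omega
    · rfl

lemma mseProj_adj {i : Fin ℓ} {x y : MseGlueV V s}
    (hadj : (mseGlueGraph Gs s t hst).Adj x y)
    (hne : mseProj s t i x ≠ mseProj s t i y) :
    (Gs i).Adj (mseProj s t i x) (mseProj s t i y) ∧
      x = mseGlueEmb s t hst i (mseProj s t i x) ∧
      y = mseGlueEmb s t hst i (mseProj s t i y) := by
  rcases (mseGlue_adj Gs s t hst).mp hadj with ⟨hxy, m, a, b, hab, hx, hy⟩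
  subst hx hy
  rcases lt_trichotomy m.1 i.1 with hm | hm | hm
  · exact absurd (by rw [mseProj_emb_lt s t hst hm, mseProj_emb_lt s t hst hm]) hne
  · have : m = i := Fin.ext hm
    subst this
    rw [mseProj_emb_self s t hst, mseProj_emb_self s t hst]
    exact ⟨hab, rfl, rfl⟩
  · exact absurd (by rw [mseProj_emb_gt s t hst hm, mseProj_emb_gt s t hst hm]) hne

open Classical in
noncomputable def mseProjWalk (i : Fin ℓ) :
    {x y : MseGlueV V s} → (mseGlueGraph Gs s t hst).Walk x y →
      (Gs i).Walk (mseProj s t i x) (mseProj s t i y)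
  | _, _, SimpleGraph.Walk.nil => SimpleGraph.Walk.nil
  | x, _, SimpleGraph.Walk.cons (v := y) h q =>
    if hxy : mseProj s t i x = mseProj s t i y then
      (mseProjWalk i q).copy hxy.symm rfl
    else
      SimpleGraph.Walk.cons (mseProj_adj Gs s t hst h hxy).1 (mseProjWalk i q)

lemma mseProjWalk_edges (i : Fin ℓ) {x y : MseGlueV V s}
    (Q : (mseGlueGraph Gs s t hst).Walk x y) {f : Sym2 (V i)}
    (hf : f ∈ (mseProjWalk Gs s t hst i Q).edges) :
    Sym2.map (mseGlueEmb s t hst i) f ∈ Q.edges := by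
  induction Q with
  | nil => simp [mseProjWalk] at hf
  | @cons u v w h q ih =>
    rw [mseProjWalk] at hf
    split_ifs at hf with hxy
    · rw [SimpleGraph.Walk.edges_copy] at hf
      exact List.mem_cons_of_mem _ (ih hf)
    · rw [SimpleGraph.Walk.edges_cons, List.mem_cons] at hf
      rcases hf with rfl | hf
      · obtain ⟨-, hu, hv⟩ := mseProj_adj Gs s t hst h hxy
        rw [SimpleGraph.Walk.edges_cons, Sym2.map_pair_eq, ← hu, ← hv]
        exact List.mem_cons_self
      · exact List.mem_cons_of_mem _ (ih hf)

lemma mseProj_src (i : Fin ℓ) :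
    mseProj s t i (mseGlueSrc hl s t hst) = s i := by
  rcases Nat.eq_zero_or_pos i.1 with h0 | h0
  · have : i = ⟨0, hl⟩ := Fin.ext h0
    subst this
    exact mseProj_emb_self s t hst _ _
  · exact mseProj_emb_lt s t hst h0 _

lemma mseProj_snk (i : Fin ℓ) :
    mseProj s t i (mseGlueSnk hl s t hst) = t i := by
  rcases Nat.lt_or_ge i.1 (ℓ - 1) with h0 | h0
  · exact mseProj_emb_gt s t hst (by simpa using h0) _
  · have : i = ⟨ℓ - 1, Nat.sub_lt hl Nat.one_pos⟩ := Fin.ext (by have := i.isLt; simp; omega)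
    subst this
    exact mseProj_emb_self s t hst _ _

end Proj

section Count

variable {α : Type*} {ι : Type*} [Finite α]

lemma mseNcard_le_sum (I : Finset ι) (A : ι → Set α) (B : Set α)
    (hB : B ⊆ ⋃ i ∈ I, A i) : B.ncard ≤ ∑ i ∈ I, (A i).ncard := by
  classical
  induction I using Finset.induction generalizing B with
  | empty =>
    simp only [Finset.notMem_empty, Set.iUnion_of_empty, Set.iUnion_empty] at hB
    simp [Set.eq_empty_iff_forall_notMem.mpr fun x hx => (hB hx).elim,
      Set.subset_empty_iff.mp hB]
  | @insert a I' ha ih =>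
    rw [Finset.sum_insert ha]
    have hBsplit : B = (B ∩ A a) ∪ (B \ A a) := by
      rw [Set.inter_union_diff]
    calc B.ncard = ((B ∩ A a) ∪ (B \ A a)).ncard := by rw [Set.inter_union_diff]
      _ ≤ (B ∩ A a).ncard + (B \ A a).ncard := Set.ncard_union_le _ _
      _ ≤ (A a).ncard + ∑ i ∈ I', (A i).ncard := by
          refine Nat.add_le_add (Set.ncard_le_ncard Set.inter_subset_right (Set.toFinite _)) ?_
          refine ih _ fun x hx => ?_
          have := hB hx.1
          simp only [Set.mem_iUnion, Finset.mem_insert, exists_prop] at this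
          obtain ⟨i, hi | hi, hxi⟩ := this
          · exact absurd (hi ▸ hxi) hx.2
          · simp only [Set.mem_iUnion, exists_prop]; exact ⟨i, hi, hxi⟩

lemma mseSum_le_ncard (I : Finset ι) (A : ι → Set α) (B : Set α)
    (hdisj : ∀ i ∈ I, ∀ j ∈ I, i ≠ j → Disjoint (A i) (A j))
    (hsub : ∀ i ∈ I, A i ⊆ B) : ∑ i ∈ I, (A i).ncard ≤ B.ncard := by
  classical
  induction I using Finset.induction generalizing B with
  | empty => simp
  | @insert a I' ha ih =>
    rw [Finset.sum_insert ha]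
    have h1 : ∑ i ∈ I', (A i).ncard ≤ (B \ A a).ncard := by
      refine ih _ (fun i hi j hj hij => hdisj i (Finset.mem_insert_of_mem hi)
        j (Finset.mem_insert_of_mem hj) hij) (fun i hi => ?_)
      have hne : a ≠ i := fun h => ha (h ▸ hi)
      exact Set.subset_diff.mpr ⟨hsub i (Finset.mem_insert_of_mem hi),
        (hdisj a (Finset.mem_insert_self a I') i (Finset.mem_insert_of_mem hi) hne).symm⟩
    calc (A a).ncard + ∑ i ∈ I', (A i).ncard
        ≤ (A a).ncard + (B \ A a).ncard := Nat.add_le_add_left h1 _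
      _ = ((A a) ∪ (B \ A a)).ncard := (Set.ncard_union_eq Set.disjoint_sdiff_right
          (Set.toFinite _) (Set.toFinite _)).symm
      _ ≤ B.ncard := Set.ncard_le_ncard
          (Set.union_subset (hsub a (Finset.mem_insert_self a I')) Set.diff_subset)
          (Set.toFinite _)

end Count


instance mseSym2Finite {α : Type*} [Finite α] : Finite (Sym2 α) :=
  Finite.of_surjective (Sym2.mk.uncurry : α × α → Sym2 α)
    (fun z => Sym2.ind (fun a b => ⟨(a, b), rfl⟩) z)


theorem stmt_11 {ℓ : ℕ} (hl : 1 ≤ ℓ) {V : Fin ℓ → Type} [∀ i, Fintype (V i)]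
    (Gs : ∀ i, SimpleGraph (V i)) (s t : ∀ i, V i) (hst : ∀ i, s i ≠ t i)
    (p k : ℕ) (hp : 1 ≤ p)
    (hall : ∀ i, ∃ P : Fin p → (Gs i).Walk (s i) (t i),
      (∀ j, (P j).IsPath) ∧ (mseSharedEdges P).ncard ≤ k + 1) :
    (∃ P : Fin p →
        (mseGlueGraph Gs s t hst).Walk (mseGlueSrc hl s t hst) (mseGlueSnk hl s t hst),
      (∀ j, (P j).IsPath) ∧ (mseSharedEdges P).ncard ≤ ℓ * (k + 1) - 1) ↔
    (∃ i, ∃ P : Fin p → (Gs i).Walk (s i) (t i),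
      (∀ j, (P j).IsPath) ∧ (mseSharedEdges P).ncard ≤ k) := by
  classical
  haveI : Finite (MseGlueV V s) := by unfold MseGlueV; infer_instance
  constructor
  · -- forward direction
    rintro ⟨Q, hQpath, hQcard⟩
    set T : ∀ _i : Fin ℓ, Set (Sym2 (V _i)) := fun i =>
      {f | ¬ f.IsDiag ∧ Sym2.map (mseGlueEmb s t hst i) f ∈ mseSharedEdges Q} with hT
    have hdisj : ∀ i ∈ Finset.univ, ∀ j ∈ Finset.univ, i ≠ j →
        Disjoint (Sym2.map (mseGlueEmb s t hst i) '' T i)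
          (Sym2.map (mseGlueEmb s t hst j) '' T j) := by
      intro i _ j _ hij
      rw [Set.disjoint_left]
      rintro e ⟨f, hf, rfl⟩ ⟨g, hg, hge⟩
      exact hij (mseSym2_eq s t hst hf.1 hge.symm).1
    have hsub : ∀ i ∈ Finset.univ,
        (Sym2.map (mseGlueEmb s t hst i) '' T i) ⊆ mseSharedEdges Q := by
      rintro i _ e ⟨f, hf, rfl⟩
      exact hf.2
    have hsum := mseSum_le_ncard Finset.univ _ _ hdisj hsub
    have himg : ∀ i : Fin ℓ, (Sym2.map (mseGlueEmb s t hst i) '' T i).ncard = (T i).ncard :=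
      fun i => Set.ncard_image_of_injective _ (Sym2.map.injective (mseEmb_inj s t hst i))
    have hex : ∃ i0, (T i0).ncard ≤ k := by
      by_contra hno
      push_neg at hno
      have h1 : ℓ * (k + 1) ≤ ∑ i : Fin ℓ, (T i).ncard := by
        calc ℓ * (k + 1) = ∑ _i : Fin ℓ, (k + 1) := by
              simp [Finset.sum_const, Finset.card_univ, mul_comm]
          _ ≤ ∑ i : Fin ℓ, (T i).ncard := Finset.sum_le_sum (fun i _ => hno i)
      have h2 : ∑ i : Fin ℓ, (T i).ncard ≤ (mseSharedEdges Q).ncard := by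
        calc ∑ i : Fin ℓ, (T i).ncard
            = ∑ i : Fin ℓ, (Sym2.map (mseGlueEmb s t hst i) '' T i).ncard :=
              Finset.sum_congr rfl (fun i _ => (himg i).symm)
          _ ≤ _ := hsum
      have hpos : 0 < ℓ * (k + 1) := Nat.mul_pos (by omega) (Nat.succ_pos k)
      have := (h1.trans (h2.trans hQcard)).trans_lt (Nat.sub_lt hpos Nat.one_pos)
      exact absurd this (lt_irrefl _)
    obtain ⟨i0, hi0⟩ := hex
    refine ⟨i0, fun m => ((mseProjWalk Gs s t hst i0 (Q m)).copy
      (mseProj_src hl s t hst i0) (mseProj_snk hl s t hst i0)).bypass,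
      fun m => SimpleGraph.Walk.bypass_isPath _, ?_⟩
    have hsubR : mseSharedEdges (fun m => ((mseProjWalk Gs s t hst i0 (Q m)).copy
        (mseProj_src hl s t hst i0) (mseProj_snk hl s t hst i0)).bypass) ⊆ T i0 := by
      rintro f ⟨a, b, hab, hfa, hfb⟩
      have hfa' : f ∈ (mseProjWalk Gs s t hst i0 (Q a)).edges := by
        have := SimpleGraph.Walk.edges_bypass_subset _ hfa
        rwa [SimpleGraph.Walk.edges_copy] at this
      have hfb' : f ∈ (mseProjWalk Gs s t hst i0 (Q b)).edges := by
        have := SimpleGraph.Walk.edges_bypass_subset _ hfb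
        rwa [SimpleGraph.Walk.edges_copy] at this
      refine ⟨SimpleGraph.not_isDiag_of_mem_edgeSet _
        (SimpleGraph.Walk.edges_subset_edgeSet _ hfa'), ?_⟩
      exact ⟨a, b, hab, mseProjWalk_edges Gs s t hst i0 _ hfa',
        mseProjWalk_edges Gs s t hst i0 _ hfb'⟩
    exact le_trans (Set.ncard_le_ncard hsubR (Set.toFinite _)) hi0
  · -- reverse direction
    rintro ⟨i0, P0, hP0path, hP0card⟩
    have hall' : ∀ i, ∃ P : Fin p → (Gs i).Walk (s i) (t i),
        (mseSharedEdges P).ncard ≤ if i = i0 then k else k + 1 := by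
      intro i
      by_cases h : i = i0
      · subst h; exact ⟨P0, by rw [if_pos rfl]; exact hP0card⟩
      · obtain ⟨P, -, hP⟩ := hall i; exact ⟨P, by rw [if_neg h]; exact hP⟩
    choose Pf hPf using hall'
    refine ⟨fun m => (mseChain hl Gs s t hst (fun i => Pf i m) (ℓ - 1)
      (Nat.sub_lt hl Nat.one_pos)).bypass, fun m => SimpleGraph.Walk.bypass_isPath _, ?_⟩
    have hsub : mseSharedEdges (fun m => (mseChain hl Gs s t hst (fun i => Pf i m) (ℓ - 1)
        (Nat.sub_lt hl Nat.one_pos)).bypass) ⊆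
        ⋃ i ∈ (Finset.univ : Finset (Fin ℓ)),
          (Sym2.map (mseGlueEmb s t hst i) '' mseSharedEdges (Pf i)) := by
      rintro e ⟨a, b, hab, hea, heb⟩
      obtain ⟨m1, f1, hf1, rfl⟩ := mseChain_edges hl Gs s t hst _ _ _
        (SimpleGraph.Walk.edges_bypass_subset _ hea)
      obtain ⟨m2, f2, hf2, he2⟩ := mseChain_edges hl Gs s t hst _ _ _
        (SimpleGraph.Walk.edges_bypass_subset _ heb)
      have hnd : ¬ f1.IsDiag := SimpleGraph.not_isDiag_of_mem_edgeSet _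
        (SimpleGraph.Walk.edges_subset_edgeSet _ hf1)
      obtain ⟨hij, hheq⟩ := mseSym2_eq s t hst hnd he2
      subst hij
      have hf12 : f1 = f2 := eq_of_heq hheq
      subst hf12
      refine Set.mem_iUnion.mpr ⟨m1, Set.mem_iUnion.mpr ⟨Finset.mem_univ _,
        ⟨f1, ⟨a, b, hab, hf1, hf2⟩, rfl⟩⟩⟩
    have hb := mseNcard_le_sum Finset.univ _ _ hsub
    have heq1 : ∑ i : Fin ℓ, (Sym2.map (mseGlueEmb s t hst i) '' mseSharedEdges (Pf i)).ncard
        = ∑ i : Fin ℓ, (mseSharedEdges (Pf i)).ncard :=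
      Finset.sum_congr rfl (fun i _ =>
        Set.ncard_image_of_injective _ (Sym2.map.injective (mseEmb_inj s t hst i)))
    have hle2 : ∑ i : Fin ℓ, (mseSharedEdges (Pf i)).ncard
        ≤ ∑ i : Fin ℓ, (if i = i0 then k else k + 1) :=
      Finset.sum_le_sum (fun i _ => hPf i)
    have heq3 : ∑ i : Fin ℓ, (if i = i0 then k else k + 1) = k + (ℓ - 1) * (k + 1) := by
      rw [← Finset.add_sum_erase _ _ (Finset.mem_univ i0), if_pos rfl]
      congr 1
      rw [Finset.sum_congr rfl (fun i hi => if_neg (Finset.ne_of_mem_erase hi)),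
        Finset.sum_const, Finset.card_erase_of_mem (Finset.mem_univ i0), Finset.card_univ,
        Fintype.card_fin, smul_eq_mul]
    have hfinal : k + (ℓ - 1) * (k + 1) ≤ ℓ * (k + 1) - 1 := by
      obtain ⟨n, rfl⟩ : ∃ n, ℓ = n + 1 := ⟨ℓ - 1, by omega⟩
      rw [Nat.succ_mul]
      simp only [Nat.add_sub_cancel]
      generalize n * (k + 1) = M
      omega
    convert hb.trans (by omega : ∑ i ∈ Finset.univ,
      (Sym2.map (mseGlueEmb s t hst i) '' mseSharedEdges (Pf i)).ncard ≤ ℓ * (k + 1) - 1) using 2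
    · rfl
    · rfl
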